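/- Let q > 1 and let f : ℝ³ → [0,∞) be measurable with ‖f‖_q := sup_{v∈ℝ³} (1+|v|)^q f(v) < ∞, ρ_f > 0, and T_f > 0. Then there exists a constant C_q > 0, depending only on q, such that ρ_f |U_f|^{q+3} ((T_f + |U_f|²) T_f)^{-3/2} ≤ C_q ‖f‖_q. -/

import Mathlib

open MeasureTheory Real Metric Set

abbrev E3 := EuclideanSpace ℝ (Fin 3)


private lemma rpow_anti {a b c : ℝ} (ha : 0 < a) (hab : a ≤ b) (hc : c ≤ 0) :
    b ^ c ≤ a ^ c := by
  have hb : 0 < b := lt_of_lt_of_le ha hab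
  rw [show c = -(-c) by ring, Real.rpow_neg hb.le, Real.rpow_neg ha.le]
  exact inv_anti₀ (Real.rpow_pos_of_pos ha _) (Real.rpow_le_rpow ha.le hab (by linarith))

private lemma amgm {F M p s : ℝ} (hF : 0 ≤ F) (hFM : F ≤ M) (hp : 0 < p) (hs : 0 < s) :
    F ≤ 1/(2*s) * (p*F) + s/2 * (M/p) := by
  have h : 1/(2*s) * (p*F) + s/2 * (M/p) = (p^2*F + s^2*M)/(2*s*p) := by
    field_simp
  rw [h, le_div_iff₀ (by positivity)]
  nlinarith [mul_nonneg hF (sq_nonneg (p - s)), mul_nonneg (sq_nonneg s) (sub_nonneg.mpr hFM)]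

private lemma amgm2 {r lam : ℝ} (hr : 0 ≤ r) (hl : 0 < lam) :
    r ≤ lam/2*r^2 + 1/(2*lam) := by
  have h : lam/2*r^2 + 1/(2*lam) = (lam^2*r^2+1)/(2*lam) := by field_simp
  rw [h, le_div_iff₀ (by positivity)]
  nlinarith [sq_nonneg (lam*r - 1)]

private lemma setInt_le_const {f : E3 → ℝ} (hm : Measurable f)
    {s : Set E3} (hs : volume s < ⊤) {M : ℝ}
    (hb : ∀ v ∈ s, |f v| ≤ M) : ∫ v in s, f v ≤ M * (volume s).toReal := by
  calc ∫ v in s, f v ≤ ‖∫ v in s, f v‖ := le_abs_self _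
  _ ≤ M * (volume s).toReal :=
      norm_setIntegral_le_of_norm_le_const hs (by simpa using hb : ∀ v ∈ s, ‖f v‖ ≤ M)

private lemma vol_cball_toReal (x : E3) {r : ℝ} (hr : 0 ≤ r) :
    (volume (closedBall x r)).toReal = (volume (ball (0:E3) 1)).toReal * r^3 := by
  rw [Measure.addHaar_closedBall volume x hr]
  rw [show (Module.finrank ℝ E3) = 3 by simp [finrank_euclideanSpace_fin]]
  rw [ENNReal.toReal_mul, ENNReal.toReal_ofReal (by positivity)]
  ring

set_option maxHeartbeats 1000000 in
private lemma radial_bound (q : ℝ) (hq : 1 < q) (u : ℝ) (hu : 0 < u) :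
    Integrable (fun w : E3 =>
        min (2^q * (1+u)^(-q)) (4^q * (1+‖w‖)^(-q)) * ((u/4 + ‖w‖)^2)⁻¹)
    ∧ ∫ w : E3, min (2^q * (1+u)^(-q)) (4^q * (1+‖w‖)^(-q)) * ((u/4 + ‖w‖)^2)⁻¹
        ≤ 3 * (volume (ball (0:E3) 1)).toReal * (2^(q+1) + 4^q/(q-1)) * (1+u)^(1-q) := by
  have h1u : (0:ℝ) < 1 + u := by linarith
  set κ := (volume (ball (0:E3) 1)).toReal with hκ
  have hκ0 : 0 ≤ κ := ENNReal.toReal_nonneg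
  set c1 := (2:ℝ)^q * (1+u)^(-q) with hc1def
  set c2 := (4:ℝ)^q with hc2def
  set b := 2*(1+u) with hbdef
  have hb : (0:ℝ) < b := by rw [hbdef]; linarith
  have hc1 : 0 ≤ c1 := mul_nonneg (rpow_nonneg (by norm_num) _) (rpow_nonneg h1u.le _)
  have hc2 : 0 ≤ c2 := rpow_nonneg (by norm_num) _
  set g : ℝ → ℝ := fun r => min c1 (c2 * (1+r)^(-q)) * ((u/4 + r)^2)⁻¹ with hgdef
  -- continuity of the E3-level function
  have hpos4 : ∀ w : E3, (0:ℝ) < u/4 + ‖w‖ := fun w => by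
    have := norm_nonneg w; linarith
  have hGcont : Continuous (fun w : E3 => g ‖w‖) := by
    apply Continuous.mul
    · apply Continuous.min continuous_const
      exact continuous_const.mul
        ((continuous_const.add continuous_norm).rpow_const
          (fun x : E3 => Or.inl (by positivity : (1:ℝ) + ‖x‖ ≠ 0)))
    · exact (((continuous_const.add continuous_norm).pow 2).inv₀
        (fun x => ne_of_gt (pow_pos (hpos4 x) 2)))
  have hg0 : ∀ r : ℝ, 0 ≤ r → 0 ≤ g r := fun r hr =>
    mul_nonneg (le_min hc1 (mul_nonneg hc2 (rpow_nonneg (by linarith) _)))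
      (inv_nonneg.mpr (sq_nonneg _))
  -- integrability via domination
  have hmax : (0:ℝ) < max (4/u) 1 := lt_of_lt_of_le one_pos (le_max_right _ _)
  have hkey : ∀ r : ℝ, 0 ≤ r → (1+r) ≤ max (4/u) 1 * (u/4+r) := by
    intro r hr
    have h1 : (4/u) * (u/4) = 1 := by field_simp
    nlinarith [le_max_left (4/u) 1, le_max_right (4/u) 1, hu]
  have hdom : ∀ w : E3, g ‖w‖ ≤ (c2 * (max (4/u) 1)^2) * (1+‖w‖)^(-(q+2)) := by
    intro w
    have hr : (0:ℝ) ≤ ‖w‖ := norm_nonneg w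
    have h1r : (0:ℝ) < 1 + ‖w‖ := by linarith
    have hsq : (1+‖w‖)^2 ≤ (max (4/u) 1)^2 * (u/4+‖w‖)^2 := by
      rw [← mul_pow]
      exact pow_le_pow_left₀ h1r.le (hkey ‖w‖ hr) 2
    have hpinv : ((u/4+‖w‖)^2)⁻¹ ≤ (max (4/u) 1)^2 * ((1+‖w‖)^2)⁻¹ := by
      rw [inv_le_iff_one_le_mul₀ (pow_pos (hpos4 w) 2)]
      calc (1:ℝ) = (1+‖w‖)^2 * ((1+‖w‖)^2)⁻¹ := by
            rw [mul_inv_cancel₀ (ne_of_gt (pow_pos h1r 2))]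
      _ ≤ ((max (4/u) 1)^2 * (u/4+‖w‖)^2) * ((1+‖w‖)^2)⁻¹ :=
            mul_le_mul_of_nonneg_right hsq (inv_nonneg.mpr (sq_nonneg _))
      _ = (max (4/u) 1)^2 * ((1+‖w‖)^2)⁻¹ * (u/4+‖w‖)^2 := by ring
    have hrpow : (1+‖w‖)^(-q) * ((1+‖w‖)^2)⁻¹ = (1+‖w‖)^(-(q+2)) := by
      rw [← rpow_natCast (1+‖w‖) 2, ← rpow_neg h1r.le, ← rpow_add h1r]
      ring_nf
    calc g ‖w‖ ≤ (c2 * (1+‖w‖)^(-q)) * ((u/4+‖w‖)^2)⁻¹ :=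
          mul_le_mul_of_nonneg_right (min_le_right _ _) (inv_nonneg.mpr (sq_nonneg _))
    _ ≤ (c2 * (1+‖w‖)^(-q)) * ((max (4/u) 1)^2 * ((1+‖w‖)^2)⁻¹) := by
        apply mul_le_mul_of_nonneg_left hpinv
          (mul_nonneg hc2 (rpow_nonneg h1r.le _))
    _ = (c2 * (max (4/u) 1)^2) * ((1+‖w‖)^(-q) * ((1+‖w‖)^2)⁻¹) := by ring
    _ = (c2 * (max (4/u) 1)^2) * (1+‖w‖)^(-(q+2)) := by rw [hrpow]
  have hGint : Integrable (fun w : E3 => g ‖w‖) := by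
    apply Integrable.mono'
      ((integrable_one_add_norm (μ := (volume : Measure E3)) (r := q+2)
        (by rw [show (Module.finrank ℝ E3) = 3 by simp [finrank_euclideanSpace_fin]]; push_cast; linarith)).const_mul
        (c2 * (max (4/u) 1)^2))
      hGcont.aestronglyMeasurable
    filter_upwards with w
    rw [Real.norm_eq_abs, abs_of_nonneg (hg0 ‖w‖ (norm_nonneg w))]
    exact hdom w
  refine ⟨hGint, ?_⟩
  -- radial formula
  have hrad := MeasureTheory.integral_fun_norm_addHaar (volume : Measure E3) g
  rw [show (Module.finrank ℝ E3) = 3 by simp [finrank_euclideanSpace_fin]] at hrad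
  -- 1-D comparison
  set H : ℝ → ℝ := fun r => if r ≤ b then c1 else c2 * r^(-q) with hHdef
  have hH1 : IntegrableOn H (Ioc 0 b) :=
    IntegrableOn.congr_fun ((integrableOn_const_iff (C := c1)).mpr (Or.inr measure_Ioc_lt_top))
      (fun r hr => (if_pos hr.2).symm) measurableSet_Ioc
  have hH2 : IntegrableOn H (Ioi b) :=
    IntegrableOn.congr_fun
      ((integrableOn_Ioi_rpow_of_lt (show -q < -1 by linarith) hb).const_mul c2)
      (fun r hr => (if_neg (not_le.mpr hr)).symm) measurableSet_Ioi
  have hIoi : Ioi (0:ℝ) = Ioc 0 b ∪ Ioi b := (Ioc_union_Ioi_eq_Ioi hb.le).symm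
  have hHint : IntegrableOn H (Ioi (0:ℝ)) := by rw [hIoi]; exact hH1.union hH2
  have hJle : (∫ y in Ioi (0:ℝ), y ^ 2 • g y) ≤ ∫ y in Ioi (0:ℝ), H y := by
    apply integral_mono_of_nonneg
    · filter_upwards [ae_restrict_mem measurableSet_Ioi] with y hy
      simp only [smul_eq_mul]
      exact mul_nonneg (sq_nonneg _) (hg0 y (le_of_lt hy))
    · exact hHint
    · filter_upwards [ae_restrict_mem measurableSet_Ioi] with y hy
      simp only [smul_eq_mul]
      have hy0 : (0:ℝ) < y := mem_Ioi.mp hy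
      have hyp : y^2 ≤ (u/4+y)^2 := by nlinarith [hu, hy0]
      have h2 : y^2 * ((u/4+y)^2)⁻¹ ≤ 1 := by
        rw [← div_eq_mul_inv, div_le_one (pow_pos (by linarith) 2)]
        exact hyp
      have hgy : y^2 * g y ≤ min c1 (c2 * (1+y)^(-q)) := by
        have := mul_le_mul_of_nonneg_right h2
          (le_min hc1 (mul_nonneg hc2 (rpow_nonneg (x := 1+y) (by linarith) (-q))))
        calc y^2 * g y = (y^2 * ((u/4+y)^2)⁻¹) * min c1 (c2 * (1+y)^(-q)) := by
              rw [hgdef]; ring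
        _ ≤ 1 * min c1 (c2 * (1+y)^(-q)) := this
        _ = min c1 (c2 * (1+y)^(-q)) := one_mul _
      by_cases hyb : y ≤ b
      · calc y^2 * g y ≤ min c1 (c2 * (1+y)^(-q)) := hgy
        _ ≤ c1 := min_le_left _ _
        _ = H y := (if_pos hyb).symm
      · calc y^2 * g y ≤ min c1 (c2 * (1+y)^(-q)) := hgy
        _ ≤ c2 * (1+y)^(-q) := min_le_right _ _
        _ ≤ c2 * y^(-q) := by
            apply mul_le_mul_of_nonneg_left
              (rpow_anti hy0 (by linarith) (by linarith)) hc2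
        _ = H y := (if_neg hyb).symm
  have hHval : ∫ y in Ioi (0:ℝ), H y = c1 * b + c2 * (b^(1-q)/(q-1)) := by
    rw [hIoi, setIntegral_union (Set.Ioc_disjoint_Ioi le_rfl) measurableSet_Ioi hH1 hH2]
    have e1 : ∫ y in Ioc (0:ℝ) b, H y = c1 * b := by
      rw [setIntegral_congr_fun measurableSet_Ioc (fun r hr => if_pos hr.2)]
      simp [Real.volume_Ioc, ENNReal.toReal_ofReal hb.le, max_eq_left hb.le, mul_comm]
    have e2 : ∫ y in Ioi b, H y = c2 * (b^(1-q)/(q-1)) := by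
      rw [setIntegral_congr_fun measurableSet_Ioi (fun r hr => if_neg (not_le.mpr hr))]
      rw [MeasureTheory.integral_const_mul, integral_Ioi_rpow_of_lt (by linarith) hb]
      congr 1
      rw [show -q+1 = 1-q by ring, div_eq_div_iff (by linarith) (by linarith)]
      ring
    rw [e1, e2]
  -- conclude
  have hfin : (∫ w : E3, g ‖w‖) ≤ 3 * κ * (c1*b + c2*(b^(1-q)/(q-1))) := by
    rw [hrad]
    simp only [smul_eq_mul, nsmul_eq_mul]
    push_cast
    calc (3:ℝ) * (κ * ∫ y in Ioi (0:ℝ), y ^ 2 • g y)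
        ≤ 3 * (κ * ∫ y in Ioi (0:ℝ), H y) := by
          apply mul_le_mul_of_nonneg_left
            (mul_le_mul_of_nonneg_left hJle hκ0) (by norm_num)
    _ = 3 * κ * (c1*b + c2*(b^(1-q)/(q-1))) := by rw [hHval]; ring
  refine hfin.trans ?_
  have hcb1 : c1 * b = 2^(q+1) * (1+u)^(1-q) := by
    have e : (1+u)^((1:ℝ)-q) = (1+u) * (1+u)^(-q) := by
      rw [show (1:ℝ)-q = 1 + -q by ring, rpow_add h1u, rpow_one]
    rw [hc1def, hbdef, e, rpow_add (by norm_num : (0:ℝ) < 2), rpow_one]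
    ring
  have hcb2 : c2 * (b^(1-q)/(q-1)) ≤ (4^q/(q-1)) * (1+u)^(1-q) := by
    rw [hc2def]
    have hble : b^(1-q) ≤ (1+u)^(1-q) :=
      rpow_anti h1u (by rw [hbdef]; linarith) (by linarith)
    calc (4:ℝ)^q * (b^(1-q)/(q-1)) ≤ (4:ℝ)^q * ((1+u)^(1-q)/(q-1)) := by
          apply mul_le_mul_of_nonneg_left
            ((div_le_div_iff_of_pos_right (by linarith)).mpr hble) (rpow_nonneg (by norm_num) _)
    _ = (4^q/(q-1)) * (1+u)^(1-q) := by ring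
  calc 3 * κ * (c1*b + c2*(b^(1-q)/(q-1)))
      ≤ 3 * κ * (2^(q+1) * (1+u)^(1-q) + (4^q/(q-1)) * (1+u)^(1-q)) := by
        apply mul_le_mul_of_nonneg_left _ (by positivity)
        rw [hcb1]
        exact add_le_add le_rfl hcb2
  _ = 3 * κ * (2^(q+1) + 4^q/(q-1)) * (1+u)^(1-q) := by ring

set_option maxHeartbeats 2000000 in
private lemma case_one (q : ℝ) (hq : 1 < q) (f : E3 → ℝ) (hf : Measurable f) (hf0 : ∀ v, 0 ≤ f v)
    (hfi : Integrable f) (N : ℝ) (hN0 : 0 ≤ N)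
    (ρf : ℝ) (Uf : E3) (Tf : ℝ)
    (hfb : ∀ v, f v ≤ N * (1 + ‖v‖) ^ (-q))
    (hmass : ∫ v, f v = ρf)
    (hI2 : Integrable (fun v => ‖v - Uf‖ ^ 2 * f v))
    (hM2 : ∫ v, ‖v - Uf‖ ^ 2 * f v = 3 * ρf * Tf)
    (hρ0 : 0 < ρf) (hT0 : 0 < Tf)
    (h24 : 24 * Tf ≤ ‖Uf‖^2) :
    ρf * ‖Uf‖ ^ (q + 3) * ((Tf + ‖Uf‖ ^ 2) * Tf) ^ (-(3 : ℝ) / 2)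
      ≤ (32 * 2^q * (volume (ball (0:E3) 1)).toReal) * N := by
  set κ := (volume (ball (0:E3) 1)).toReal with hκ
  have hκ0 : 0 ≤ κ := ENNReal.toReal_nonneg
  set u := ‖Uf‖ with hu_def
  have hu0 : 0 ≤ u := norm_nonneg _
  have hvpos : ∀ v : E3, (0:ℝ) < 1 + ‖v‖ := fun v => by positivity
  have hu : 0 < u := by
    rcases eq_or_lt_of_le hu0 with h | h
    · exfalso; rw [← h] at h24; simp at h24; nlinarith
    · exact h
  set R := (6*Tf) ^ ((1:ℝ)/2) with hR_def
  have h6T : (0:ℝ) < 6 * Tf := by linarith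
  have hR0 : 0 < R := rpow_pos_of_pos h6T _
  have hR2 : R^2 = 6*Tf := by
    rw [hR_def, ← rpow_natCast ((6*Tf) ^ ((1:ℝ)/2)) 2, ← rpow_mul h6T.le]
    norm_num
  have hR3 : R^3 = (6*Tf) ^ ((3:ℝ)/2) := by
    rw [hR_def, ← rpow_natCast ((6*Tf) ^ ((1:ℝ)/2)) 3, ← rpow_mul h6T.le]
    norm_num
  have hRu : R ≤ u / 2 := by
    have h1 : R^2 ≤ (u/2)^2 := by rw [hR2]; nlinarith
    nlinarith
  -- mass near Uf
  have hball : ∫ v in closedBall Uf R, f v ≤ (N * 2^q * (1+u)^(-q)) * (κ * R^3) := by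
    rw [← vol_cball_toReal Uf hR0.le]
    apply setInt_le_const hf measure_closedBall_lt_top
    intro v hv
    rw [abs_of_nonneg (hf0 v)]
    have hvu : ‖v - Uf‖ ≤ R := mem_closedBall_iff_norm.mp hv
    have hnv : u / 2 ≤ ‖v‖ := by
      have h2 : u ≤ ‖v‖ + ‖v - Uf‖ := by
        have h := norm_sub_le v (v - Uf)
        simpa using h
      linarith
    have hcomp : ((1+u)/2 : ℝ) ≤ 1 + ‖v‖ := by linarith
    have h3 : (1 + ‖v‖) ^ (-q) ≤ ((1+u)/2) ^ (-q) :=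
      rpow_anti (by linarith) hcomp (by linarith)
    have h4 : ((1+u)/2 : ℝ) ^ (-q) = 2^q * (1+u)^(-q) := by
      rw [div_rpow (by linarith) (by norm_num), Real.rpow_neg (by linarith),
        Real.rpow_neg (by norm_num), div_eq_mul_inv, inv_inv]
      ring
    calc f v ≤ N * (1 + ‖v‖) ^ (-q) := hfb v
    _ ≤ N * ((1+u)/2) ^ (-q) := by
        exact mul_le_mul_of_nonneg_left h3 hN0
    _ = N * 2^q * (1+u)^(-q) := by rw [h4]; ring
  -- tail
  have htail : ∫ v in (closedBall Uf R)ᶜ, f v ≤ ρf / 2 := by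
    have hmono : ∫ v in (closedBall Uf R)ᶜ, f v
        ≤ ∫ v in (closedBall Uf R)ᶜ, (6*Tf)⁻¹ * (‖v - Uf‖^2 * f v) := by
      apply setIntegral_mono_on hfi.integrableOn
        ((hI2.const_mul _).integrableOn) measurableSet_closedBall.compl
      intro v hv
      have hvR : R < ‖v - Uf‖ := by
        rw [mem_compl_iff, mem_closedBall_iff_norm] at hv
        push_neg at hv
        exact hv
      have h5 : R^2 ≤ ‖v - Uf‖^2 := by nlinarith [norm_nonneg (v - Uf)]
      rw [hR2] at h5
      have h6 : 1 ≤ (6*Tf)⁻¹ * ‖v - Uf‖^2 := by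
        rw [← div_eq_inv_mul, le_div_iff₀ h6T]; linarith
      nlinarith [hf0 v]
    have h7 : ∫ v in (closedBall Uf R)ᶜ, (6*Tf)⁻¹ * (‖v - Uf‖^2 * f v)
        = (6*Tf)⁻¹ * ∫ v in (closedBall Uf R)ᶜ, ‖v - Uf‖^2 * f v :=
      integral_const_mul _ _
    have h8 : ∫ v in (closedBall Uf R)ᶜ, ‖v - Uf‖^2 * f v ≤ 3 * ρf * Tf := by
      rw [← hM2]
      apply setIntegral_le_integral hI2
      filter_upwards with v
      exact mul_nonneg (sq_nonneg _) (hf0 v)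
    calc ∫ v in (closedBall Uf R)ᶜ, f v
        ≤ (6*Tf)⁻¹ * ∫ v in (closedBall Uf R)ᶜ, ‖v - Uf‖^2 * f v := by rw [← h7]; exact hmono
    _ ≤ (6*Tf)⁻¹ * (3 * ρf * Tf) := by
        exact mul_le_mul_of_nonneg_left h8 (inv_nonneg.mpr h6T.le)
    _ = ρf / 2 := by field_simp; ring
  have hρbound : ρf ≤ 2^(q+1) * N * (1+u)^(-q) * κ * R^3 := by
    have hsplit : ρf = (∫ v in closedBall Uf R, f v) + ∫ v in (closedBall Uf R)ᶜ, f v := by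
      rw [← hmass]
      exact (integral_add_compl measurableSet_closedBall hfi).symm
    have : ρf ≤ (N * 2^q * (1+u)^(-q)) * (κ * R^3) + ρf / 2 := by
      calc ρf = (∫ v in closedBall Uf R, f v) + ∫ v in (closedBall Uf R)ᶜ, f v := hsplit
      _ ≤ (N * 2^q * (1+u)^(-q)) * (κ * R^3) + ρf / 2 := add_le_add hball htail
    have h9 : (2:ℝ)^(q+1) = 2 * 2^q := by
      rw [rpow_add (by norm_num : (0:ℝ) < 2), rpow_one]; ring
    rw [h9]; nlinarith
  -- final assembly
  have hq3 : (0:ℝ) ≤ u ^ (q+3) := rpow_nonneg hu0 _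
  have hstep1 : ((Tf + u^2) * Tf) ^ (-(3:ℝ)/2) ≤ (u^2 * Tf) ^ (-(3:ℝ)/2) := by
    exact rpow_anti (mul_pos (pow_pos hu 2) hT0) (by nlinarith [hT0]) (by norm_num)
  have hpow : u ^ (q+3) * (u^2 * Tf) ^ (-(3:ℝ)/2) = u ^ q * Tf ^ (-(3:ℝ)/2) := by
    rw [mul_rpow (sq_nonneg u) hT0.le, ← rpow_natCast u 2, ← rpow_mul hu0,
      show ((2:ℕ):ℝ) * (-(3:ℝ)/2) = -3 by norm_num]
    rw [← mul_assoc, ← rpow_add hu, show q + 3 + -3 = q by ring]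
  have h1u : (0:ℝ) < 1 + u := by linarith
  have hfinal1 : (1+u)^(-q) * u^q ≤ 1 := by
    have hle : u^q ≤ (1+u)^q := rpow_le_rpow hu0 (by linarith) (by linarith)
    calc (1+u)^(-q) * u^q ≤ (1+u)^(-q) * (1+u)^q :=
          mul_le_mul_of_nonneg_left hle (rpow_nonneg h1u.le _)
    _ = 1 := by rw [← rpow_add h1u]; simp
  have hfinal2 : R^3 * Tf^(-(3:ℝ)/2) ≤ 16 := by
    have hsq : (6:ℝ)^((1:ℝ)/2) ≤ 5/2 := by
      have h1 : ((6:ℝ)^((1:ℝ)/2))^2 = 6 := by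
        rw [← rpow_natCast ((6:ℝ)^((1:ℝ)/2)) 2, ← rpow_mul (by norm_num : (0:ℝ) ≤ 6)]
        norm_num
      nlinarith [rpow_nonneg (by norm_num : (0:ℝ) ≤ 6) ((1:ℝ)/2)]
    have h63 : (6:ℝ)^((3:ℝ)/2) ≤ 16 := by
      have : (6:ℝ)^((3:ℝ)/2) = 6 * 6^((1:ℝ)/2) := by
        rw [show (3:ℝ)/2 = 1 + 1/2 by norm_num, rpow_add (by norm_num : (0:ℝ) < 6), rpow_one]
      rw [this]; nlinarith
    have hsplit : R^3 * Tf^(-(3:ℝ)/2) = (6:ℝ)^((3:ℝ)/2) := by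
      rw [hR3, mul_rpow (by norm_num : (0:ℝ) ≤ 6) hT0.le, mul_assoc,
        ← rpow_add hT0, show (3:ℝ)/2 + -(3:ℝ)/2 = 0 by ring, rpow_zero, mul_one]
    rw [hsplit]; exact h63
  have hnn1 : (0:ℝ) ≤ ρf * u ^ (q+3) := mul_nonneg hρ0.le hq3
  have hnn2 : (0:ℝ) ≤ u^q * Tf^(-(3:ℝ)/2) :=
    mul_nonneg (rpow_nonneg hu0 _) (rpow_nonneg hT0.le _)
  calc ρf * u ^ (q + 3) * ((Tf + u ^ 2) * Tf) ^ (-(3 : ℝ) / 2)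
      ≤ ρf * u ^ (q + 3) * ((u^2 * Tf) ^ (-(3:ℝ)/2)) := mul_le_mul_of_nonneg_left hstep1 hnn1
  _ = ρf * (u^q * Tf^(-(3:ℝ)/2)) := by rw [mul_assoc, hpow]
  _ ≤ (2^(q+1) * N * (1+u)^(-q) * κ * R^3) * (u^q * Tf^(-(3:ℝ)/2)) :=
      mul_le_mul_of_nonneg_right hρbound hnn2
  _ = (2^(q+1) * N * κ) * ((R^3 * Tf^(-(3:ℝ)/2)) * ((1+u)^(-q) * u^q)) := by ring
  _ ≤ (2^(q+1) * N * κ) * (16 * 1) := by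
      apply mul_le_mul_of_nonneg_left _ (by positivity)
      apply mul_le_mul hfinal2 hfinal1 _ (by norm_num)
      exact mul_nonneg (rpow_nonneg h1u.le _) (rpow_nonneg hu0 _)
  _ = (32 * 2^q * κ) * N := by
      rw [rpow_add (by norm_num : (0:ℝ) < 2), rpow_one]; ring

set_option maxHeartbeats 2000000 in
private lemma case_two (q : ℝ) (hq : 1 < q) (f : E3 → ℝ) (hf : Measurable f) (hf0 : ∀ v, 0 ≤ f v)
    (hfi : Integrable f) (N : ℝ) (hN0 : 0 ≤ N)
    (ρf : ℝ) (Uf : E3) (Tf : ℝ)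
    (hfb : ∀ v, f v ≤ N * (1 + ‖v‖) ^ (-q))
    (hmass : ∫ v, f v = ρf)
    (hInorm : Integrable (fun v => ‖v‖ * f v))
    (hfirst : ρf * ‖Uf‖ ≤ ∫ v, ‖v‖ * f v)
    (hI2 : Integrable (fun v => ‖v - Uf‖ ^ 2 * f v))
    (hM2 : ∫ v, ‖v - Uf‖ ^ 2 * f v = 3 * ρf * Tf)
    (hρ0 : 0 < ρf) (hT0 : 0 < Tf)
    (h24 : ‖Uf‖^2 < 24 * Tf) (hu : 0 < ‖Uf‖) :
    ρf * ‖Uf‖ ^ (q + 3) * ((Tf + ‖Uf‖ ^ 2) * Tf) ^ (-(3 : ℝ) / 2)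
      ≤ ((5184*(4/3)^q + 16402500*(2^(q+1) + 4^q/(q-1))) * (volume (ball (0:E3) 1)).toReal) * N := by
  set κ := (volume (ball (0:E3) 1)).toReal with hκ
  have hκ0 : 0 ≤ κ := ENNReal.toReal_nonneg
  set u := ‖Uf‖ with hu_def
  have hu0 : 0 ≤ u := norm_nonneg _
  have h1u : (0:ℝ) < 1 + u := by linarith
  set c1 := (2:ℝ)^q * (1+u)^(-q) with hc1def
  set c2 := (4:ℝ)^q with hc2def
  set c3 := (2:ℝ)^(q+1) + 4^q/(q-1) with hc3def
  have hc3 : 0 ≤ c3 := by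
    rw [hc3def]
    have : (0:ℝ) ≤ 4^q/(q-1) := div_nonneg (rpow_nonneg (by norm_num) _) (by linarith)
    have h2 : (0:ℝ) ≤ 2^(q+1) := rpow_nonneg (by norm_num) _
    linarith
  set G := fun w : E3 => min c1 (c2 * (1+‖w‖)^(-q)) * ((u/4 + ‖w‖)^2)⁻¹ with hGdef
  obtain ⟨hGint, hGval⟩ := radial_bound q hq u hu
  have hG0 : ∀ w : E3, 0 ≤ G w := fun w =>
    mul_nonneg (le_min (mul_nonneg (rpow_nonneg (by norm_num) _) (rpow_nonneg h1u.le _))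
      (mul_nonneg (rpow_nonneg (by norm_num) _) (rpow_nonneg (by positivity) _)))
      (inv_nonneg.mpr (sq_nonneg _))
  -- parameters
  set lam := u/(90*Tf) with hlamdef
  set ss := 4050*Tf^2/u^2 with hssdef
  have hlam : 0 < lam := div_pos hu (by linarith)
  have hss : 0 < ss := div_pos (by positivity) (pow_pos hu 2)
  set A := 5*lam/2 + 5/(2*lam)*(2/ss) with hAdef
  set B := 5/(2*lam)*(ss/2) with hBdef
  have hA0 : 0 ≤ A := by positivity
  have hB0 : 0 ≤ B := by positivity
  have hA3 : A * (3*ρf*Tf) = 5/12 * (ρf * u) := by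
    rw [hAdef, hlamdef, hssdef]
    field_simp
    ring
  have hB3 : B = 455625 * Tf^3 / u^3 := by
    rw [hBdef, hlamdef, hssdef]
    field_simp
    ring
  -- sets
  set S := closedBall (0:E3) (u/2) with hSdef
  set P := closedBall Uf (u/4) with hPdef
  set Q := Sᶜ \ P with hQdef
  have hQmeas : MeasurableSet Q := measurableSet_closedBall.compl.diff measurableSet_closedBall
  -- pointwise master inequality on Q
  have hmaster : ∀ v ∈ Q, ‖v‖ * f v ≤ A * (‖v - Uf‖^2 * f v) + (B*N) * G (v - Uf) := by
    intro v hv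
    have hv1 : u/2 < ‖v‖ := by
      have h := hv.1
      rw [hSdef, mem_compl_iff, mem_closedBall_iff_norm, sub_zero] at h
      exact not_le.mp h
    have hv2 : u/4 < ‖v - Uf‖ := by
      have h := hv.2
      rw [hPdef, mem_closedBall_iff_norm] at h
      exact not_le.mp h
    have hr0 : 0 < ‖v - Uf‖ := lt_of_le_of_lt (by positivity) hv2
    have hF := hf0 v
    have hxr : ‖v‖ ≤ 5 * ‖v - Uf‖ := by
      have h1 : ‖v‖ ≤ ‖v - Uf‖ + ‖Uf‖ := by
        calc ‖v‖ = ‖(v - Uf) + Uf‖ := by rw [sub_add_cancel]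
        _ ≤ ‖v - Uf‖ + ‖Uf‖ := norm_add_le _ _
      linarith
    have hm : (1 + ‖v‖)^(-q) ≤ min c1 (c2 * (1+‖v - Uf‖)^(-q)) := by
      apply le_min
      · have hcomp : ((1+u)/2 : ℝ) ≤ 1 + ‖v‖ := by linarith
        have h3 : (1 + ‖v‖) ^ (-q) ≤ ((1+u)/2) ^ (-q) :=
          rpow_anti (by linarith) hcomp (by linarith)
        have h4 : ((1+u)/2 : ℝ) ^ (-q) = c1 := by
          rw [hc1def, div_rpow h1u.le (by norm_num), Real.rpow_neg h1u.le,
            Real.rpow_neg (by norm_num), div_eq_mul_inv, inv_inv]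
          ring
        rw [← h4]; exact h3
      · have hvge : ‖v - Uf‖ - u ≤ ‖v‖ := by
          have h1 : ‖v - Uf‖ ≤ ‖v‖ + ‖Uf‖ := norm_sub_le _ _
          linarith
        have hcomp : ((1+‖v - Uf‖)/4 : ℝ) ≤ 1 + ‖v‖ := by
          rcases le_total (‖v - Uf‖) (2*u) with h | h
          · linarith
          · linarith
        have h3 : (1 + ‖v‖) ^ (-q) ≤ ((1+‖v - Uf‖)/4) ^ (-q) :=
          rpow_anti (by linarith) hcomp (by linarith)
        have h4 : ((1+‖v - Uf‖)/4 : ℝ) ^ (-q) = c2 * (1+‖v - Uf‖)^(-q) := by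
          rw [hc2def, div_rpow (by linarith) (by norm_num), Real.rpow_neg (by linarith),
            Real.rpow_neg (by norm_num), div_eq_mul_inv, inv_inv]
          ring
        rw [← h4]; exact h3
    have hFm : f v ≤ N * min c1 (c2 * (1+‖v - Uf‖)^(-q)) :=
      (hfb v).trans (mul_le_mul_of_nonneg_left hm hN0)
    have hp : (0:ℝ) < (u/4 + ‖v - Uf‖)^2 := pow_pos (by linarith) 2
    have step2 := amgm (hf0 v) hFm hp hss
    have hple : (u/4 + ‖v - Uf‖)^2 ≤ 4 * ‖v - Uf‖^2 := by nlinarith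
    have step2' : f v ≤ 1/(2*ss)*(4*(‖v - Uf‖^2 * f v))
        + ss/2*(N * (min c1 (c2 * (1+‖v - Uf‖)^(-q)) * ((u/4 + ‖v - Uf‖)^2)⁻¹)) := by
      have h5 : 1/(2*ss) * ((u/4 + ‖v - Uf‖)^2 * f v) ≤ 1/(2*ss)*(4*(‖v - Uf‖^2 * f v)) := by
        apply mul_le_mul_of_nonneg_left _ (by positivity)
        calc (u/4 + ‖v - Uf‖)^2 * f v ≤ (4 * ‖v - Uf‖^2) * f v :=
              mul_le_mul_of_nonneg_right hple hF
        _ = 4*(‖v - Uf‖^2 * f v) := by ring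
      have h6 : (N * min c1 (c2 * (1+‖v - Uf‖)^(-q))) / (u/4 + ‖v - Uf‖)^2
          = N * (min c1 (c2 * (1+‖v - Uf‖)^(-q)) * ((u/4 + ‖v - Uf‖)^2)⁻¹) := by
        rw [div_eq_mul_inv]; ring
      calc f v ≤ 1/(2*ss) * ((u/4 + ‖v - Uf‖)^2 * f v)
            + ss/2 * ((N * min c1 (c2 * (1+‖v - Uf‖)^(-q))) / (u/4 + ‖v - Uf‖)^2) := step2
      _ ≤ 1/(2*ss)*(4*(‖v - Uf‖^2 * f v))
            + ss/2*(N * (min c1 (c2 * (1+‖v - Uf‖)^(-q)) * ((u/4 + ‖v - Uf‖)^2)⁻¹)) := by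
          rw [h6] at *
          exact add_le_add h5 le_rfl
    have step1 : ‖v - Uf‖ * f v ≤ (lam/2*‖v - Uf‖^2 + 1/(2*lam)) * f v :=
      mul_le_mul_of_nonneg_right (amgm2 hr0.le hlam) hF
    have hGv : G (v - Uf) = min c1 (c2 * (1+‖v - Uf‖)^(-q)) * ((u/4 + ‖v - Uf‖)^2)⁻¹ := rfl
    calc ‖v‖ * f v ≤ (5 * ‖v - Uf‖) * f v := mul_le_mul_of_nonneg_right hxr hF
    _ = 5 * (‖v - Uf‖ * f v) := by ring
    _ ≤ 5 * ((lam/2*‖v - Uf‖^2 + 1/(2*lam)) * f v) := by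
        apply mul_le_mul_of_nonneg_left step1 (by norm_num)
    _ = (5*lam/2) * (‖v - Uf‖^2 * f v) + (5/(2*lam)) * f v := by field_simp
    _ ≤ (5*lam/2) * (‖v - Uf‖^2 * f v) + (5/(2*lam)) * (1/(2*ss)*(4*(‖v - Uf‖^2 * f v))
          + ss/2*(N * (min c1 (c2 * (1+‖v - Uf‖)^(-q)) * ((u/4 + ‖v - Uf‖)^2)⁻¹))) := by
        apply add_le_add le_rfl
        apply mul_le_mul_of_nonneg_left step2' (by positivity)
    _ = A * (‖v - Uf‖^2 * f v) + (B*N) * G (v - Uf) := by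
        rw [hGv, hAdef, hBdef]; field_simp; ring
  -- integral estimates
  have hGtrans : Integrable (fun v => G (v - Uf)) := hGint.comp_sub_right Uf
  have hQint : ∫ v in Q, ‖v‖ * f v
      ≤ A * (3*ρf*Tf) + (B*N) * (3 * κ * c3 * (1+u)^(1-q)) := by
    have hRHSi : Integrable (fun v => A * (‖v - Uf‖^2 * f v) + (B*N) * G (v - Uf)) :=
      (hI2.const_mul A).add (hGtrans.const_mul (B*N))
    calc ∫ v in Q, ‖v‖ * f v
        ≤ ∫ v in Q, (A * (‖v - Uf‖^2 * f v) + (B*N) * G (v - Uf)) :=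
          setIntegral_mono_on hInorm.integrableOn hRHSi.integrableOn hQmeas hmaster
    _ = A * (∫ v in Q, ‖v - Uf‖^2 * f v) + (B*N) * ∫ v in Q, G (v - Uf) := by
        rw [integral_add (hI2.const_mul A).integrableOn ((hGtrans.const_mul (B*N)).integrableOn)]
        rw [integral_const_mul, integral_const_mul]
    _ ≤ A * (3*ρf*Tf) + (B*N) * (3 * κ * c3 * (1+u)^(1-q)) := by
        apply add_le_add
        · apply mul_le_mul_of_nonneg_left _ hA0
          rw [← hM2]
          apply setIntegral_le_integral hI2
          filter_upwards with v
          exact mul_nonneg (sq_nonneg _) (hf0 v)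
        · apply mul_le_mul_of_nonneg_left _ (mul_nonneg hB0 hN0)
          calc ∫ v in Q, G (v - Uf) ≤ ∫ v, G (v - Uf) := by
                apply setIntegral_le_integral hGtrans
                filter_upwards with v
                exact hG0 _
          _ = ∫ w, G w := integral_sub_right_eq_self G Uf
          _ ≤ 3 * κ * c3 * (1+u)^(1-q) := hGval
  have hSint : ∫ v in S, ‖v‖ * f v ≤ u/2 * ρf := by
    calc ∫ v in S, ‖v‖ * f v ≤ ∫ v in S, u/2 * f v := by
          apply setIntegral_mono_on hInorm.integrableOn (hfi.const_mul (u/2)).integrableOn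
            measurableSet_closedBall
          intro v hv
          have hv' : ‖v - 0‖ ≤ u/2 := mem_closedBall_iff_norm.mp hv
          rw [sub_zero] at hv'
          exact mul_le_mul_of_nonneg_right hv' (hf0 v)
    _ = u/2 * ∫ v in S, f v := integral_const_mul _ _
    _ ≤ u/2 * ρf := by
        apply mul_le_mul_of_nonneg_left _ (by positivity)
        rw [← hmass]
        exact setIntegral_le_integral hfi (Filter.Eventually.of_forall hf0)
  have hPint : ∫ v in P, ‖v‖ * f v
      ≤ (2*u * (N*(4/3)^q*(1+u)^(-q))) * (κ*(u/4)^3) := by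
    rw [hPdef, ← vol_cball_toReal Uf (by positivity : (0:ℝ) ≤ u/4)]
    apply setInt_le_const (show Measurable (fun v : E3 => ‖v‖ * f v) from measurable_norm.mul hf) measure_closedBall_lt_top
    intro v hv
    rw [mem_closedBall_iff_norm] at hv
    have h1 : ‖v‖ ≤ ‖v - Uf‖ + ‖Uf‖ := by
      calc ‖v‖ = ‖(v - Uf) + Uf‖ := by rw [sub_add_cancel]
      _ ≤ ‖v - Uf‖ + ‖Uf‖ := norm_add_le _ _
    have h2 : u ≤ ‖v‖ + ‖v - Uf‖ := by
      have h := norm_sub_le v (v - Uf)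
      simpa using h
    have hx2u : ‖v‖ ≤ 2*u := by linarith
    have hcomp : ((3:ℝ)/4 * (1+u)) ≤ 1 + ‖v‖ := by linarith
    have h3 : (1 + ‖v‖) ^ (-q) ≤ ((3:ℝ)/4 * (1+u)) ^ (-q) :=
      rpow_anti (by linarith) hcomp (by linarith)
    have h4 : ((3:ℝ)/4 * (1+u)) ^ (-q) = (4/3)^q * (1+u)^(-q) := by
      rw [mul_rpow (by norm_num) h1u.le,
        show (4:ℝ)/3 = ((3:ℝ)/4)⁻¹ by norm_num,
        inv_rpow (by norm_num), ← Real.rpow_neg (by norm_num)]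
    have hfv : f v ≤ N*(4/3)^q*(1+u)^(-q) := by
      calc f v ≤ N * (1 + ‖v‖) ^ (-q) := hfb v
      _ ≤ N * ((3:ℝ)/4 * (1+u)) ^ (-q) := mul_le_mul_of_nonneg_left h3 hN0
      _ = N*(4/3)^q*(1+u)^(-q) := by rw [h4]; ring
    rw [abs_of_nonneg (mul_nonneg (norm_nonneg v) (hf0 v))]
    apply mul_le_mul hx2u hfv (hf0 v) (by positivity)
  -- chain
  have hchain : ρf * u ≤ u/2 * ρf + ((2*u * (N*(4/3)^q*(1+u)^(-q))) * (κ*(u/4)^3)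
      + (A * (3*ρf*Tf) + (B*N) * (3 * κ * c3 * (1+u)^(1-q)))) := by
    have h2 : (∫ v, ‖v‖ * f v)
        = (∫ v in S, ‖v‖ * f v) + ∫ v in Sᶜ, ‖v‖ * f v :=
      (integral_add_compl measurableSet_closedBall hInorm).symm
    have h3 : (∫ v in Sᶜ, ‖v‖ * f v)
        = (∫ v in Sᶜ ∩ P, ‖v‖ * f v) + ∫ v in Q, ‖v‖ * f v := by
      rw [hQdef]
      exact (integral_inter_add_diff measurableSet_closedBall hInorm.integrableOn).symm
    have h4 : (∫ v in Sᶜ ∩ P, ‖v‖ * f v) ≤ ∫ v in P, ‖v‖ * f v := by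
      apply setIntegral_mono_set hInorm.integrableOn
      · filter_upwards with v
        exact mul_nonneg (norm_nonneg v) (hf0 v)
      · exact HasSubset.Subset.eventuallyLE inter_subset_right
    calc ρf * u ≤ ∫ v, ‖v‖ * f v := hfirst
    _ = (∫ v in S, ‖v‖ * f v) + ((∫ v in Sᶜ ∩ P, ‖v‖ * f v) + ∫ v in Q, ‖v‖ * f v) := by
        rw [h2, h3]
    _ ≤ u/2 * ρf + ((2*u * (N*(4/3)^q*(1+u)^(-q))) * (κ*(u/4)^3)
        + (A * (3*ρf*Tf) + (B*N) * (3 * κ * c3 * (1+u)^(1-q)))) := by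
        apply add_le_add hSint
        exact add_le_add (h4.trans hPint) hQint
  have hkey : ρf * u ≤ 12 * ((2*u * (N*(4/3)^q*(1+u)^(-q))) * (κ*(u/4)^3))
      + 12 * ((B*N) * (3 * κ * c3 * (1+u)^(1-q))) := by
    rw [hA3] at hchain
    nlinarith [hchain]
  -- final algebra
  have e_split : ρf * u^(q+3) = (ρf*u) * u^(q+2) := by
    rw [show q+3 = 1+(q+2) by ring, rpow_add hu, rpow_one]; ring
  have hq2nn : (0:ℝ) ≤ u^(q+2) := rpow_nonneg hu0 _
  have hq6' : u^(q+6)*(1+u)^(-q) ≤ 13824*Tf^3 := by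
    have h1 : u^(q+6) = u^q * u^(6:ℕ) := by
      rw [← rpow_natCast u 6, ← rpow_add hu]
      norm_num
    have h2 : u^q * (1+u)^(-q) ≤ 1 := by
      have hle : u^q ≤ (1+u)^q := rpow_le_rpow hu0 (by linarith) (by linarith)
      rw [Real.rpow_neg h1u.le]
      calc u^q * ((1+u)^q)⁻¹ ≤ (1+u)^q * ((1+u)^q)⁻¹ :=
            mul_le_mul_of_nonneg_right hle (inv_nonneg.mpr (rpow_nonneg h1u.le q))
      _ = 1 := mul_inv_cancel₀ (ne_of_gt (rpow_pos_of_pos h1u q))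
    have h3 : u^(6:ℕ) ≤ 13824*Tf^3 := by
      calc u^(6:ℕ) = (u^2)^3 := by ring
      _ ≤ (24*Tf)^3 := pow_le_pow_left₀ (sq_nonneg u) h24.le 3
      _ = 13824*Tf^3 := by ring
    calc u^(q+6)*(1+u)^(-q) = (u^q*(1+u)^(-q)) * u^(6:ℕ) := by rw [h1]; ring
    _ ≤ 1 * (13824*Tf^3) := by
        apply mul_le_mul h2 h3 (by positivity) (by norm_num)
    _ = 13824*Tf^3 := one_mul _
  have hT1 : 12*((2*u*(N*(4/3)^q*(1+u)^(-q)))*(κ*(u/4)^3))*u^(q+2)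
      ≤ 5184*(4/3)^q*κ*N*Tf^3 := by
    have h46 : u^(((4:ℕ)):ℝ) * u^(q+2) = u^(q+6) := by
      rw [← rpow_add hu, show (((4:ℕ)):ℝ)+(q+2) = q+6 by push_cast; ring]
    have e1 : 12*((2*u*(N*(4/3)^q*(1+u)^(-q)))*(κ*(u/4)^3))*u^(q+2)
        = (3/8)*((4/3)^q*κ*N)*(u^(q+6)*(1+u)^(-q)) := by
      rw [← h46, rpow_natCast u 4]
      ring
    rw [e1]
    calc (3/8)*((4/3)^q*κ*N)*(u^(q+6)*(1+u)^(-q))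
        ≤ (3/8)*((4/3)^q*κ*N)*(13824*Tf^3) := by
          apply mul_le_mul_of_nonneg_left hq6'
          have h43 : (0:ℝ) ≤ (4/3)^q := rpow_nonneg (by norm_num) _
          nlinarith [mul_nonneg (mul_nonneg h43 hκ0) hN0]
    _ = 5184*(4/3)^q*κ*N*Tf^3 := by ring
  have hq1' : u^(q-1)*(1+u)^(1-q) ≤ 1 := by
    have hle : u^(q-1) ≤ (1+u)^(q-1) := rpow_le_rpow hu0 (by linarith) (by linarith)
    have hinv : (1+u)^((1:ℝ)-q) = ((1+u)^(q-1))⁻¹ := by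
      rw [show (1:ℝ)-q = -(q-1) by ring, Real.rpow_neg h1u.le]
    rw [hinv]
    calc u^(q-1) * ((1+u)^(q-1))⁻¹ ≤ (1+u)^(q-1)*((1+u)^(q-1))⁻¹ :=
          mul_le_mul_of_nonneg_right hle (inv_nonneg.mpr (rpow_nonneg h1u.le _))
    _ = 1 := mul_inv_cancel₀ (ne_of_gt (rpow_pos_of_pos h1u _))
  have hT2 : 12*((B*N)*(3*κ*c3*(1+u)^(1-q)))*u^(q+2) ≤ 16402500*c3*κ*N*Tf^3 := by
    have h23 : u^(q-1) * u^(((3:ℕ)):ℝ) = u^(q+2) := by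
      rw [← rpow_add hu, show q-1+(((3:ℕ)):ℝ) = q+2 by push_cast; ring]
    have e2 : 12*((B*N)*(3*κ*c3*(1+u)^(1-q)))*u^(q+2)
        = 16402500*(c3*κ*N*Tf^3)*(u^(q-1)*(1+u)^(1-q)) := by
      rw [hB3, ← h23, rpow_natCast u 3]
      field_simp
      ring
    rw [e2]
    calc 16402500*(c3*κ*N*Tf^3)*(u^(q-1)*(1+u)^(1-q))
        ≤ 16402500*(c3*κ*N*Tf^3)*1 := by
          apply mul_le_mul_of_nonneg_left hq1'
          have h5 : (0:ℝ) ≤ Tf^3 := le_of_lt (pow_pos hT0 3)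
          nlinarith [hc3, hκ0, hN0, mul_nonneg (mul_nonneg hc3 hκ0) hN0,
            mul_nonneg (mul_nonneg (mul_nonneg hc3 hκ0) hN0) h5]
    _ = 16402500*c3*κ*N*Tf^3 := by ring
  have hmain : ρf * u^(q+3) ≤ ((5184*(4/3)^q + 16402500*c3)*κ)*N*Tf^3 := by
    calc ρf * u^(q+3) = (ρf*u)*u^(q+2) := e_split
    _ ≤ (12 * ((2*u * (N*(4/3)^q*(1+u)^(-q))) * (κ*(u/4)^3))
        + 12 * ((B*N) * (3 * κ * c3 * (1+u)^(1-q))))*u^(q+2) :=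
        mul_le_mul_of_nonneg_right hkey hq2nn
    _ = 12*((2*u*(N*(4/3)^q*(1+u)^(-q)))*(κ*(u/4)^3))*u^(q+2)
        + 12*((B*N)*(3*κ*c3*(1+u)^(1-q)))*u^(q+2) := by ring
    _ ≤ 5184*(4/3)^q*κ*N*Tf^3 + 16402500*c3*κ*N*Tf^3 := add_le_add hT1 hT2
    _ = ((5184*(4/3)^q + 16402500*c3)*κ)*N*Tf^3 := by ring
  have hstep1 : ((Tf+u^2)*Tf)^(-(3:ℝ)/2) ≤ Tf^(-(3:ℝ)) := by
    have h1 : ((Tf+u^2)*Tf)^(-(3:ℝ)/2) ≤ (Tf*Tf)^(-(3:ℝ)/2) :=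
      rpow_anti (mul_pos hT0 hT0) (by nlinarith [sq_nonneg u]) (by norm_num)
    have h2 : (Tf*Tf)^(-(3:ℝ)/2) = Tf^(-(3:ℝ)) := by
      rw [show Tf*Tf = Tf^(2:ℕ) by ring, ← rpow_natCast Tf 2, ← rpow_mul hT0.le]
      norm_num
    rw [← h2]; exact h1
  have hnn : (0:ℝ) ≤ ρf * u^(q+3) := mul_nonneg hρ0.le (rpow_nonneg hu0 _)
  calc ρf * u^(q+3) * ((Tf+u^2)*Tf)^(-(3:ℝ)/2)
      ≤ ρf * u^(q+3) * Tf^(-(3:ℝ)) := mul_le_mul_of_nonneg_left hstep1 hnn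
  _ ≤ (((5184*(4/3)^q + 16402500*c3)*κ)*N*Tf^3) * Tf^(-(3:ℝ)) :=
      mul_le_mul_of_nonneg_right hmain (rpow_nonneg hT0.le _)
  _ = ((5184*(4/3)^q + 16402500*c3)*κ)*N * (Tf^(((3:ℕ)):ℝ) * Tf^(-(3:ℝ))) := by
      rw [rpow_natCast]; ring
  _ = ((5184*(4/3)^q + 16402500*c3)*κ)*N := by
      rw [← rpow_add hT0]
      norm_num


set_option maxHeartbeats 1000000 in
/-- for q > 1 there is a constant C_q, depending only on q, with
ρ_f |U_f|^{q+3} ((T_f + |U_f|²) T_f)^{-3/2} ≤ C_q ‖f‖_q. -/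
theorem lem_temp_iii (q : ℝ) (hq : 1 < q) :
    ∃ C : ℝ, 0 < C ∧
      ∀ (f : E3 → ℝ), Measurable f → (∀ v, 0 ≤ f v) →
        Integrable f →
        ∀ N : ℝ, (∀ v, (1 + ‖v‖) ^ q * f v ≤ N) →
        ∀ (ρf : ℝ) (Uf : E3) (Tf : ℝ),
          ρf = ∫ v, f v →
          Integrable (fun v => f v • v) →
          Uf = ρf⁻¹ • ∫ v, f v • v →
          Integrable (fun v => ‖v - Uf‖ ^ 2 * f v) →
          Tf = (3 * ρf)⁻¹ * ∫ v, ‖v - Uf‖ ^ 2 * f v →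
          0 < ρf → 0 < Tf →
          ρf * ‖Uf‖ ^ (q + 3) * ((Tf + ‖Uf‖ ^ 2) * Tf) ^ (-(3 : ℝ) / 2) ≤ C * N := by
  classical
  set κ := (volume (ball (0:E3) 1)).toReal with hκ
  have hκ0 : 0 ≤ κ := ENNReal.toReal_nonneg
  have hA0 : (0:ℝ) ≤ 32 * 2^q * κ :=
    mul_nonneg (mul_nonneg (by norm_num) (rpow_nonneg (by norm_num) _)) hκ0
  have hB0 : (0:ℝ) ≤ (5184*(4/3)^q + 16402500*(2^(q+1) + 4^q/(q-1))) * κ := by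
    apply mul_nonneg _ hκ0
    have h1 : (0:ℝ) ≤ (4/3)^q := rpow_nonneg (by norm_num) _
    have h2 : (0:ℝ) ≤ 2^(q+1) := rpow_nonneg (by norm_num) _
    have h3 : (0:ℝ) ≤ 4^q/(q-1) := div_nonneg (rpow_nonneg (by norm_num) _) (by linarith)
    nlinarith
  refine ⟨32 * 2^q * κ + (5184*(4/3)^q + 16402500*(2^(q+1) + 4^q/(q-1))) * κ + 1,
    by linarith, ?_⟩
  intro f hf hf0 hfi N hN ρf Uf Tf hρ hIv hU hI2 hT hρ0 hT0
  -- shared preparation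
  have hvpos : ∀ v : E3, (0:ℝ) < 1 + ‖v‖ := fun v => by positivity
  have hN0 : 0 ≤ N := le_trans (mul_nonneg (rpow_nonneg (hvpos 0).le q) (hf0 0)) (hN 0)
  have hfb : ∀ v, f v ≤ N * (1 + ‖v‖) ^ (-q) := by
    intro v
    have h1 : (0:ℝ) < (1 + ‖v‖) ^ q := rpow_pos_of_pos (hvpos v) q
    calc f v = ((1 + ‖v‖) ^ q * f v) / (1 + ‖v‖) ^ q := by field_simp
    _ ≤ N / (1 + ‖v‖) ^ q := by
        gcongr
        exact hN v
    _ = N * (1 + ‖v‖) ^ (-q) := by rw [rpow_neg (hvpos v).le]; ring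
  have hmass : ∫ v, f v = ρf := hρ.symm
  have hmom : ∫ v, f v • v = ρf • Uf := by
    rw [hU, smul_smul, mul_inv_cancel₀ (ne_of_gt hρ0), one_smul]
  have hM2 : ∫ v, ‖v - Uf‖ ^ 2 * f v = 3 * ρf * Tf := by
    rw [hT]; field_simp
  have hInorm : Integrable (fun v => ‖v‖ * f v) := by
    have h : (fun v : E3 => ‖v‖ * f v) = fun v => ‖f v • v‖ := by
      funext v
      rw [norm_smul, Real.norm_eq_abs, abs_of_nonneg (hf0 v)]; ring
    rw [h]; exact hIv.norm
  have hfirst : ρf * ‖Uf‖ ≤ ∫ v, ‖v‖ * f v := by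
    have h1 : ρf * ‖Uf‖ = ‖ρf • Uf‖ := by
      rw [norm_smul, Real.norm_eq_abs, abs_of_nonneg hρ0.le]
    rw [h1, ← hmom]
    calc ‖∫ v, f v • v‖ ≤ ∫ v, ‖f v • v‖ := norm_integral_le_integral_norm _
    _ = ∫ v, ‖v‖ * f v := by
        congr 1; funext v
        rw [norm_smul, Real.norm_eq_abs, abs_of_nonneg (hf0 v)]; ring
  rcases le_or_gt (24*Tf) (‖Uf‖^2) with h24 | h24
  · have hc1 := case_one q hq f hf hf0 hfi N hN0 ρf Uf Tf hfb hmass hI2 hM2 hρ0 hT0 h24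
    calc ρf * ‖Uf‖ ^ (q + 3) * ((Tf + ‖Uf‖ ^ 2) * Tf) ^ (-(3 : ℝ) / 2)
        ≤ 32 * 2^q * κ * N := hc1
    _ ≤ (32 * 2^q * κ + (5184*(4/3)^q + 16402500*(2^(q+1) + 4^q/(q-1))) * κ + 1) * N := by
        nlinarith [mul_nonneg hB0 hN0]
  · rcases eq_or_lt_of_le (norm_nonneg Uf) with hu | hu
    · have h0 : ‖Uf‖ = 0 := hu.symm
      rw [h0, Real.zero_rpow (by positivity : q + 3 ≠ 0), mul_zero, zero_mul]
      have hC0 : (0:ℝ) ≤ 32 * 2^q * κ + (5184*(4/3)^q + 16402500*(2^(q+1) + 4^q/(q-1))) * κ + 1 := by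
        linarith
      exact mul_nonneg hC0 hN0
    · have hc2 := case_two q hq f hf hf0 hfi N hN0 ρf Uf Tf hfb hmass hInorm hfirst hI2 hM2
        hρ0 hT0 h24 hu
      calc ρf * ‖Uf‖ ^ (q + 3) * ((Tf + ‖Uf‖ ^ 2) * Tf) ^ (-(3 : ℝ) / 2)
          ≤ (5184*(4/3)^q + 16402500*(2^(q+1) + 4^q/(q-1))) * κ * N := hc2
      _ ≤ (32 * 2^q * κ + (5184*(4/3)^q + 16402500*(2^(q+1) + 4^q/(q-1))) * κ + 1) * N := by
          nlinarith [mul_nonneg hA0 hN0]
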